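/- Let N ≥ 2 and m ≥ 1 be integers. For k = 0, …, N−1 let A_k, B_k, C_k be real m×m matrices with A_k and B_k symmetric, and suppose that each 2m×2m block matrix H_k = [[A_k, C_k], [C_kᵀ, B_k]] is positive semidefinite. If, in addition, A_k is positive definite for every k = 0, …, N−1, or B_k is positive definite for every k = 0, …, N−1, then the (N−1)m × (N−1)m block tridiagonal matrix H with diagonal blocks D_k = B_{k−1} + A_k (k = 1, …, N−1), superdiagonal blocks C_k (k = 1, …, N−2) and subdiagonal blocks C_kᵀ is positive definite. -/

import Mathlib

open Matrix Finset

/-- The `(N-1)m × (N-1)m` symmetric block tridiagonal matrix whose diagonal blocks are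
`D_k = B_{k-1} + A_k` for `k = 1, …, N-1`, whose superdiagonal blocks are `C_k` for
`k = 1, …, N-2`, and whose subdiagonal blocks are `C_kᵀ`.  Block rows/columns are
0-indexed: block index `r : Fin (N-1)` corresponds to `k = r + 1`. -/
def blockTriDiag (N m : ℕ) (A B C : ℕ → Matrix (Fin m) (Fin m) ℝ) :
    Matrix (Fin (N - 1) × Fin m) (Fin (N - 1) × Fin m) ℝ :=
  fun p q =>
    if (p.1 : ℕ) = (q.1 : ℕ) then (B (p.1 : ℕ) + A ((p.1 : ℕ) + 1)) p.2 q.2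
    else if (p.1 : ℕ) + 1 = (q.1 : ℕ) then C ((p.1 : ℕ) + 1) p.2 q.2
    else if (q.1 : ℕ) + 1 = (p.1 : ℕ) then C ((q.1 : ℕ) + 1) q.2 p.2
    else 0

namespace BlockTriAux

def Xv {n m : ℕ} (x : Fin n × Fin m → ℝ) (k : ℕ) : Fin m → ℝ :=
  if h : k < n then fun i => x (⟨k, h⟩, i) else 0

def Xw {n m : ℕ} (x : Fin n × Fin m → ℝ) : ℕ → Fin m → ℝ
  | 0 => 0
  | k + 1 => Xv x k

lemma Xv_of_le {n m : ℕ} (x : Fin n × Fin m → ℝ) {k : ℕ} (h : n ≤ k) : Xv x k = 0 :=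
  dif_neg (not_lt.2 h)

lemma Xv_fin {n m : ℕ} (x : Fin n × Fin m → ℝ) (r : Fin n) :
    Xv x (r : ℕ) = fun i => x (r, i) := by
  unfold Xv
  rw [dif_pos r.isLt]

lemma sum_ite_coe {n : ℕ} (c : ℕ) (f : Fin n → ℝ) :
    (∑ s : Fin n, if (s : ℕ) = c then f s else 0) =
      if hc : c < n then f ⟨c, hc⟩ else 0 := by
  split_ifs with hc
  · have h : ∀ s : Fin n, ((s : ℕ) = c) = (s = ⟨c, hc⟩) := by
      intro s; simp [Fin.ext_iff]
    simp_rw [h]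
    simp
  · apply Finset.sum_eq_zero
    intro s _
    exact if_neg (by have := s.isLt; omega)

lemma row_formula (N m : ℕ) (A B C : ℕ → Matrix (Fin m) (Fin m) ℝ)
    (x : Fin (N - 1) × Fin m → ℝ) (r : Fin (N - 1)) (i : Fin m) :
    (blockTriDiag N m A B C *ᵥ x) (r, i) =
      ((B (r : ℕ) + A ((r : ℕ) + 1)) *ᵥ Xv x (r : ℕ)) i
      + (C ((r : ℕ) + 1) *ᵥ Xv x ((r : ℕ) + 1)) i
      + ((C (r : ℕ))ᵀ *ᵥ Xw x (r : ℕ)) i := by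
  have hstart : (blockTriDiag N m A B C *ᵥ x) (r, i)
      = ∑ q : Fin (N - 1) × Fin m, blockTriDiag N m A B C (r, i) q * x q := rfl
  rw [hstart, Fintype.sum_prod_type]
  have hterm : ∀ s : Fin (N - 1),
      (∑ j : Fin m, blockTriDiag N m A B C (r, i) (s, j) * x (s, j)) =
        (if (s : ℕ) = (r : ℕ) then ∑ j : Fin m, (B (r : ℕ) + A ((r : ℕ) + 1)) i j * x (s, j) else 0)
        + (if (s : ℕ) = (r : ℕ) + 1 then ∑ j : Fin m, C ((r : ℕ) + 1) i j * x (s, j) else 0)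
        + (if (s : ℕ) + 1 = (r : ℕ) then ∑ j : Fin m, C ((s : ℕ) + 1) j i * x (s, j) else 0) := by
    intro s
    unfold blockTriDiag
    by_cases h1 : (r : ℕ) = (s : ℕ)
    · simp only [if_pos h1, if_pos h1.symm,
        if_neg (show ¬((s : ℕ) = (r : ℕ) + 1) by omega),
        if_neg (show ¬((s : ℕ) + 1 = (r : ℕ)) by omega)]
      rw [h1]; ring
    · by_cases h2 : (r : ℕ) + 1 = (s : ℕ)
      · simp only [if_neg h1, if_pos h2, if_pos h2.symm,
          if_neg (show ¬((s : ℕ) = (r : ℕ)) by omega),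
          if_neg (show ¬((s : ℕ) + 1 = (r : ℕ)) by omega)]
        ring
      · by_cases h3 : (s : ℕ) + 1 = (r : ℕ)
        · simp only [if_neg h1, if_neg h2, if_pos h3,
            if_neg (show ¬((s : ℕ) = (r : ℕ)) by omega),
            if_neg (show ¬((s : ℕ) = (r : ℕ) + 1) by omega)]
          ring
        · simp only [if_neg h1, if_neg h2, if_neg h3,
            if_neg (show ¬((s : ℕ) = (r : ℕ)) by omega),
            if_neg (show ¬((s : ℕ) = (r : ℕ) + 1) by omega)]
          simp
  simp only [hterm]
  rw [Finset.sum_add_distrib, Finset.sum_add_distrib, sum_ite_coe, sum_ite_coe]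
  congr 1
  · congr 1
    · -- diagonal term
      rw [dif_pos r.isLt, Xv_fin]
      simp [mulVec, dotProduct]
    · -- superdiagonal term
      split_ifs with hc
      · have hXv : Xv x ((r : ℕ) + 1) = fun j => x (⟨(r : ℕ) + 1, hc⟩, j) := by
          unfold Xv; rw [dif_pos hc]
        rw [hXv]
        simp [mulVec, dotProduct]
      · rw [Xv_of_le x (by omega), mulVec_zero]
        rfl
  · -- subdiagonal term
    rcases hr : (r : ℕ) with _ | t
    · have h0 : (∑ s : Fin (N - 1), if (s : ℕ) + 1 = 0 then
          (∑ j : Fin m, C ((s : ℕ) + 1) j i * x (s, j)) else 0) = 0 :=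
        Finset.sum_eq_zero (fun s _ => if_neg (by omega))
      rw [h0]
      rw [show Xw x 0 = (0 : Fin m → ℝ) from rfl, mulVec_zero]
      rfl
    · have hcond : ∀ s : Fin (N - 1), ((s : ℕ) + 1 = t + 1) = ((s : ℕ) = t) := by
        intro s; simp
      simp_rw [hcond]
      rw [sum_ite_coe, dif_pos (show t < N - 1 by have := r.isLt; omega)]
      have hXv : Xv x t = fun j => x (⟨t, by have := r.isLt; omega⟩, j) := by
        unfold Xv; rw [dif_pos (show t < N - 1 by have := r.isLt; omega)]
      rw [show Xw x (t + 1) = Xv x t from rfl, hXv]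
      simp [mulVec, dotProduct, transpose_apply]

lemma key (N m : ℕ) (hN : 2 ≤ N) (A B C : ℕ → Matrix (Fin m) (Fin m) ℝ)
    (x : Fin (N - 1) × Fin m → ℝ) :
    x ⬝ᵥ (blockTriDiag N m A B C *ᵥ x) =
      ∑ k ∈ Finset.range N,
        (Sum.elim (Xw x k) (Xv x k)) ⬝ᵥ
          ((Matrix.fromBlocks (A k) (C k) (C k)ᵀ (B k)) *ᵥ Sum.elim (Xw x k) (Xv x k)) := by
  have hn : N - 1 + 1 = N := by omega
  have h1 : x ⬝ᵥ (blockTriDiag N m A B C *ᵥ x)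
      = ∑ k ∈ Finset.range (N - 1),
          (Xv x k ⬝ᵥ ((B k + A (k + 1)) *ᵥ Xv x k)
           + Xv x k ⬝ᵥ (C (k + 1) *ᵥ Xv x (k + 1))
           + Xv x k ⬝ᵥ ((C k)ᵀ *ᵥ Xw x k)) := by
    rw [dotProduct, Fintype.sum_prod_type,
      ← Fin.sum_univ_eq_sum_range (fun k =>
          Xv x k ⬝ᵥ ((B k + A (k + 1)) *ᵥ Xv x k)
          + Xv x k ⬝ᵥ (C (k + 1) *ᵥ Xv x (k + 1))
          + Xv x k ⬝ᵥ ((C k)ᵀ *ᵥ Xw x k)) (N - 1)]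
    refine Finset.sum_congr rfl (fun r _ => ?_)
    simp only [row_formula N m A B C x r]
    rw [Xv_fin]
    simp [dotProduct, mul_add, Finset.sum_add_distrib]
  have h2 : ∀ k : ℕ,
      (Sum.elim (Xw x k) (Xv x k)) ⬝ᵥ
          ((Matrix.fromBlocks (A k) (C k) (C k)ᵀ (B k)) *ᵥ Sum.elim (Xw x k) (Xv x k))
      = (Xw x k ⬝ᵥ (A k *ᵥ Xw x k) + Xw x k ⬝ᵥ (C k *ᵥ Xv x k))
        + (Xv x k ⬝ᵥ ((C k)ᵀ *ᵥ Xw x k) + Xv x k ⬝ᵥ (B k *ᵥ Xv x k)) := by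
    intro k
    rw [fromBlocks_mulVec, sumElim_dotProduct_sumElim, dotProduct_add, dotProduct_add]
    simp [Sum.elim_comp_inl, Sum.elim_comp_inr]
  have hrange : Finset.range N = Finset.range (N - 1 + 1) := by rw [hn]
  have hP0 : Xw x 0 ⬝ᵥ (A 0 *ᵥ Xw x 0) + Xw x 0 ⬝ᵥ (C 0 *ᵥ Xv x 0) = 0 := by
    rw [show Xw x 0 = (0 : Fin m → ℝ) from rfl]; simp
  have hQn : Xv x (N - 1) ⬝ᵥ ((C (N - 1))ᵀ *ᵥ Xw x (N - 1))
      + Xv x (N - 1) ⬝ᵥ (B (N - 1) *ᵥ Xv x (N - 1)) = 0 := by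
    rw [Xv_of_le x le_rfl]; simp
  have h3 : (∑ k ∈ Finset.range N,
      (Sum.elim (Xw x k) (Xv x k)) ⬝ᵥ
          ((Matrix.fromBlocks (A k) (C k) (C k)ᵀ (B k)) *ᵥ Sum.elim (Xw x k) (Xv x k)))
      = ∑ k ∈ Finset.range (N - 1),
          (Xv x k ⬝ᵥ ((B k + A (k + 1)) *ᵥ Xv x k)
           + Xv x k ⬝ᵥ (C (k + 1) *ᵥ Xv x (k + 1))
           + Xv x k ⬝ᵥ ((C k)ᵀ *ᵥ Xw x k)) := by
    simp only [h2]
    rw [hrange, Finset.sum_add_distrib, Finset.sum_range_succ', Finset.sum_range_succ,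
      hP0, hQn, add_zero, add_zero, ← Finset.sum_add_distrib]
    refine Finset.sum_congr rfl (fun k hk => ?_)
    rw [show Xw x (k + 1) = Xv x k from rfl, add_mulVec, dotProduct_add]
    ring
  rw [h1]
  exact h3.symm

end BlockTriAux

open BlockTriAux in
theorem blockTriDiag_posDef
    (N m : ℕ) (hN : 2 ≤ N) (hm : 1 ≤ m)
    (A B C : ℕ → Matrix (Fin m) (Fin m) ℝ)
    (hA : ∀ k < N, (A k).IsSymm) (hB : ∀ k < N, (B k).IsSymm)
    (hHk : ∀ k < N, (Matrix.fromBlocks (A k) (C k) (C k)ᵀ (B k)).PosSemidef)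
    (hdef : (∀ k < N, (A k).PosDef) ∨ (∀ k < N, (B k).PosDef)) :
    (blockTriDiag N m A B C).PosDef := by
  have hsymm : ∀ p q, blockTriDiag N m A B C q p = blockTriDiag N m A B C p q := by
    rintro ⟨r, i⟩ ⟨s, j⟩
    have hr := r.isLt
    have hs := s.isLt
    unfold blockTriDiag
    by_cases h1 : (r : ℕ) = (s : ℕ)
    · simp only [if_pos h1, if_pos h1.symm]
      rw [← h1]
      rw [((hB (r : ℕ) (by omega)).add (hA ((r : ℕ) + 1) (by omega))).apply]
    · by_cases h2 : (r : ℕ) + 1 = (s : ℕ)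
      · simp only [if_neg h1, if_neg (show ¬((s : ℕ) = (r : ℕ)) by omega),
          if_neg (show ¬((s : ℕ) + 1 = (r : ℕ)) by omega), if_pos h2]
      · by_cases h3 : (s : ℕ) + 1 = (r : ℕ)
        · simp only [if_neg h1, if_neg (show ¬((s : ℕ) = (r : ℕ)) by omega),
            if_neg h2, if_pos h3]
        · simp only [if_neg h1, if_neg (show ¬((s : ℕ) = (r : ℕ)) by omega),
            if_neg h2, if_neg h3]
  rw [posDef_iff_dotProduct_mulVec]
  constructor
  · show (blockTriDiag N m A B C)ᴴ = _
    ext p q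
    rw [conjTranspose_apply, star_trivial]
    exact hsymm p q
  · intro x hx
    rw [show star x = x from star_trivial x, key N m hN A B C x]
    have hnn : ∀ k ∈ Finset.range N, (0:ℝ) ≤
        (Sum.elim (Xw x k) (Xv x k)) ⬝ᵥ
          ((Matrix.fromBlocks (A k) (C k) (C k)ᵀ (B k)) *ᵥ Sum.elim (Xw x k) (Xv x k)) := by
      intro k hk
      have := (hHk k (Finset.mem_range.1 hk)).dotProduct_mulVec_nonneg (Sum.elim (Xw x k) (Xv x k))
      simpa using this
    rcases (Finset.sum_nonneg hnn).lt_or_eq with h | h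
    · exact h
    · -- the form vanishes: derive x = 0, contradiction
      exfalso
      have hzero := (Finset.sum_eq_zero_iff_of_nonneg hnn).1 h.symm
      have hker : ∀ k < N,
          (Matrix.fromBlocks (A k) (C k) (C k)ᵀ (B k)) *ᵥ Sum.elim (Xw x k) (Xv x k) = 0 := by
        intro k hk
        have h0 := hzero k (Finset.mem_range.2 hk)
        have := ((hHk k hk).dotProduct_mulVec_zero_iff (Sum.elim (Xw x k) (Xv x k))).1 (by
          rw [show star (Sum.elim (Xw x k) (Xv x k)) = Sum.elim (Xw x k) (Xv x k) from
            star_trivial _]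
          exact h0)
        exact this
      have hE1 : ∀ k < N, A k *ᵥ Xw x k + C k *ᵥ Xv x k = 0 := by
        intro k hk
        have hz := hker k hk
        rw [fromBlocks_mulVec, Sum.elim_comp_inl, Sum.elim_comp_inr] at hz
        exact funext fun i => congrFun hz (Sum.inl i)
      have hE2 : ∀ k < N, (C k)ᵀ *ᵥ Xw x k + B k *ᵥ Xv x k = 0 := by
        intro k hk
        have hz := hker k hk
        rw [fromBlocks_mulVec, Sum.elim_comp_inl, Sum.elim_comp_inr] at hz
        exact funext fun i => congrFun hz (Sum.inr i)
      have hker0 : ∀ (M : Matrix (Fin m) (Fin m) ℝ), M.PosDef →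
          ∀ v : Fin m → ℝ, M *ᵥ v = 0 → v = 0 := by
        intro M hM v hv
        by_contra hne
        have hlt := hM.dotProduct_mulVec_pos hne
        rw [show star v = v from star_trivial v, hv, dotProduct_zero] at hlt
        exact lt_irrefl 0 hlt
      have hXv : ∀ k, Xv x k = 0 := by
        rcases hdef with hAd | hBd
        · have down : ∀ d k, N - 1 ≤ k + d → Xv x k = 0 := by
            intro d
            induction d with
            | zero => intro k hk; exact Xv_of_le x (by omega)
            | succ d ih =>
              intro k hk
              by_cases hkn : N - 1 ≤ k
              · exact Xv_of_le x hkn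
              · have h1' : Xv x (k + 1) = 0 := ih (k + 1) (by omega)
                have hE := hE1 (k + 1) (by omega)
                rw [show Xw x (k + 1) = Xv x k from rfl, h1', mulVec_zero, add_zero] at hE
                exact hker0 _ (hAd (k + 1) (by omega)) _ hE
          intro k
          by_cases hk : N - 1 ≤ k
          · exact Xv_of_le x hk
          · exact down (N - 1) k (by omega)
        · intro k
          induction k with
          | zero =>
            have hE := hE2 0 (by omega)
            rw [show Xw x 0 = (0 : Fin m → ℝ) from rfl, mulVec_zero, zero_add] at hE
            exact hker0 _ (hBd 0 (by omega)) _ hE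
          | succ k ih =>
            by_cases hkn : N - 1 ≤ k + 1
            · exact Xv_of_le x hkn
            · have hE := hE2 (k + 1) (by omega)
              rw [show Xw x (k + 1) = Xv x k from rfl, ih, mulVec_zero, zero_add] at hE
              exact hker0 _ (hBd (k + 1) (by omega)) _ hE
      apply hx
      funext p
      obtain ⟨r, i⟩ := p
      have := congrFun (hXv (r : ℕ)) i
      rw [Xv_fin] at this
      exact this
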